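/- arXiv:1312.1748 — 3 statements merged into one kernel-verified Lean document; each statement's English description precedes it below -/
import Mathlib

section
/- Fix real numbers s, t with t > 0 and real numbers M₁, M₂ ≥ 0. Then the set of triples (r, c, χ) ∈ ℤ³ such that r ≥ 1, 0 ≤ c − rs ≤ M₂, 2χr − r² − 3rc − c² ≤ 1, and r t²/2 − (s²/2 − 1) r + (3/2 + s) c − χ ≤ M₁, is finite. -/
set_option maxHeartbeats 1000000

/-- Fix real `s, t` with `t > 0` and reals `M₁, M₂ ≥ 0`. Then the set of
triples `(r, c, χ) ∈ ℤ³` such that `r ≥ 1`, `0 ≤ c − rs ≤ M₂`,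
`2χr − r² − 3rc − c² ≤ 1`, and `r t²/2 − (s²/2 − 1) r + (3/2 + s) c − χ ≤ M₁`,
is finite. -/
theorem stmt2 (s t M₁ M₂ : ℝ) (ht : 0 < t) (hM₁ : 0 ≤ M₁) (hM₂ : 0 ≤ M₂) :
    {p : ℤ × ℤ × ℤ | 1 ≤ p.1 ∧
      0 ≤ (p.2.1 : ℝ) - (p.1 : ℝ) * s ∧ (p.2.1 : ℝ) - (p.1 : ℝ) * s ≤ M₂ ∧
      2 * p.2.2 * p.1 - p.1 ^ 2 - 3 * p.1 * p.2.1 - p.2.1 ^ 2 ≤ 1 ∧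
      (p.1 : ℝ) * t ^ 2 / 2 - (s ^ 2 / 2 - 1) * (p.1 : ℝ) + (3 / 2 + s) * (p.2.1 : ℝ)
        - (p.2.2 : ℝ) ≤ M₁}.Finite := by
  set K : ℝ := (2 * M₁ + 1 + M₂ ^ 2) / t ^ 2 with hKdef
  set R : ℤ := max 1 ⌈K⌉ with hRdef
  set C : ℤ := max 0 ⌈|s| * (R : ℝ) + M₂⌉ with hCdef
  set B : ℤ := 1 + R ^ 2 + 3 * R * C + C ^ 2 with hBdef
  set L : ℤ := ⌊-(|t ^ 2 / 2 - (s ^ 2 / 2 - 1)| * (R : ℝ) + |3 / 2 + s| * (C : ℝ) + M₁)⌋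
    with hLdef
  apply Set.Finite.subset (Set.finite_Icc ((1 : ℤ), -C, L) ((R : ℤ), C, max B 0))
  rintro ⟨r, c, χ⟩ ⟨hr, h2, h3, h4, h5⟩
  dsimp only at hr h2 h3 h4 h5
  simp only [Set.mem_Icc, Prod.mk_le_mk]
  have hr1 : (1 : ℝ) ≤ (r : ℝ) := by exact_mod_cast hr
  have h4R : 2 * (χ : ℝ) * (r : ℝ) - (r : ℝ) ^ 2 - 3 * (r : ℝ) * (c : ℝ) - (c : ℝ) ^ 2
      ≤ 1 := by exact_mod_cast h4
  have hR1 : (1 : ℤ) ≤ R := le_max_left _ _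
  have hC0 : (0 : ℤ) ≤ C := le_max_left _ _
  -- bound on r
  have hsq : ((c : ℝ) - (r : ℝ) * s) ^ 2 ≤ M₂ ^ 2 := by nlinarith
  have h6 : (r : ℝ) ^ 2 * t ^ 2 ≤ (r : ℝ) * (2 * M₁ + 1 + M₂ ^ 2) := by
    have hp : 0 ≤ 2 * (r : ℝ) * (M₁ - ((r : ℝ) * t ^ 2 / 2 - (s ^ 2 / 2 - 1) * (r : ℝ)
        + (3 / 2 + s) * (c : ℝ) - (χ : ℝ))) := by
      apply mul_nonneg (by linarith)
      linarith
    nlinarith [sq_nonneg ((r : ℝ) - 1)]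
  have hrt : (r : ℝ) * t ^ 2 ≤ 2 * M₁ + 1 + M₂ ^ 2 := by
    have hr0 : (0 : ℝ) < (r : ℝ) := by linarith
    have := (mul_le_mul_iff_right₀ hr0).mp (by nlinarith : (r : ℝ) * ((r : ℝ) * t ^ 2)
      ≤ (r : ℝ) * (2 * M₁ + 1 + M₂ ^ 2))
    linarith
  have hrK : (r : ℝ) ≤ K := by
    rw [hKdef, le_div_iff₀ (by positivity : (0 : ℝ) < t ^ 2)]
    linarith
  have hrR : r ≤ R := by
    have : (r : ℝ) ≤ (⌈K⌉ : ℝ) := hrK.trans (Int.le_ceil K)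
    have : r ≤ ⌈K⌉ := by exact_mod_cast this
    exact this.trans (le_max_right _ _)
  have hrRr : (r : ℝ) ≤ (R : ℝ) := by exact_mod_cast hrR
  -- bounds on c
  have hx : |s| * (R : ℝ) + M₂ ≤ (C : ℝ) := by
    have h' : (⌈|s| * (R : ℝ) + M₂⌉ : ℤ) ≤ C := le_max_right _ _
    calc |s| * (R : ℝ) + M₂ ≤ (⌈|s| * (R : ℝ) + M₂⌉ : ℝ) := Int.le_ceil _
    _ ≤ (C : ℝ) := by exact_mod_cast h'
  have hcCu : (c : ℝ) ≤ (C : ℝ) := by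
    nlinarith [le_abs_self s, neg_abs_le s, abs_nonneg s]
  have hcCl : -(C : ℝ) ≤ (c : ℝ) := by
    nlinarith [le_abs_self s, neg_abs_le s, abs_nonneg s]
  have hcu : c ≤ C := by exact_mod_cast hcCu
  have hcl : -C ≤ c := by
    have h' : ((-C : ℤ) : ℝ) ≤ (c : ℝ) := by push_cast; linarith
    exact_mod_cast h'
  -- upper bound on χ
  have hχu : χ ≤ max B 0 := by
    rcases le_or_gt χ 0 with h | h
    · exact h.trans (le_max_right _ _)
    · have hB : 2 * χ ≤ B := by
        rw [hBdef]
        nlinarith [h4, hr, hrR, hcu, hcl, hC0, hR1, h]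
      have : χ ≤ B := by linarith
      exact this.trans (le_max_left _ _)
  -- lower bound on χ
  have hχl : L ≤ χ := by
    have hfl : (L : ℝ) ≤ -(|t ^ 2 / 2 - (s ^ 2 / 2 - 1)| * (R : ℝ)
        + |3 / 2 + s| * (C : ℝ) + M₁) := Int.floor_le _
    have hra : -((R : ℝ) * |t ^ 2 / 2 - (s ^ 2 / 2 - 1)|)
        ≤ (r : ℝ) * (t ^ 2 / 2 - (s ^ 2 / 2 - 1)) := by
      nlinarith [le_abs_self (t ^ 2 / 2 - (s ^ 2 / 2 - 1)),
        neg_abs_le (t ^ 2 / 2 - (s ^ 2 / 2 - 1)), abs_nonneg (t ^ 2 / 2 - (s ^ 2 / 2 - 1))]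
    have hcabs : |(c : ℝ)| ≤ (C : ℝ) := abs_le.mpr ⟨hcCl, hcCu⟩
    have hmul : |3 / 2 + s| * |(c : ℝ)| ≤ |3 / 2 + s| * (C : ℝ) :=
      mul_le_mul_of_nonneg_left hcabs (abs_nonneg _)
    have hbc : -(|3 / 2 + s| * (C : ℝ)) ≤ (3 / 2 + s) * (c : ℝ) := by
      have := neg_abs_le ((3 / 2 + s) * (c : ℝ))
      rw [abs_mul] at this
      linarith
    have hχr : (r : ℝ) * (t ^ 2 / 2 - (s ^ 2 / 2 - 1)) + (3 / 2 + s) * (c : ℝ) - M₁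
        ≤ (χ : ℝ) := by nlinarith
    have h' : (L : ℝ) ≤ (χ : ℝ) := by linarith
    exact_mod_cast h'
  exact ⟨⟨hr, hcl, hχl⟩, hrR, hcu, hχu⟩
end

section
/- Fix an integer n and define f(n, s, j) = j(2n + s²) + s(2n + j²) for real s and integer j, and the vectors a(k) = (2n + (k−1)(k−4), −(k−1)), b(k) = (2n + (k−2)(k+1), −(k+1)) in ℝ². Then for all integers k and real s: −f(n, s, k−1)·b(k) + f(n, s, k+1)·a(k) = 2(2n − (k−1)(k+1))·(2n + s² + 3s, s). Consequently, if s < 0 and (k−1)(k+1) < 2n, this vector is a positive scalar multiple of (m, −1/2), where m = −(2n + s²)/(2s) − 3/2; moreover the semicircular wall for the invariant (1, 0, 1−n) passing through (s, 0) has center x = (s² + 2n)/(2s) = −m − 3/2. -/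
/-- `f(n, s, j) = j(2n + s²) + s(2n + j²)`, arising from the character `ρ_{s,0+,k}`. -/
def fchar (n : ℤ) (s : ℝ) (j : ℤ) : ℝ :=
  (j : ℝ) * (2 * (n : ℝ) + s ^ 2) + s * (2 * (n : ℝ) + (j : ℝ) ^ 2)

/-- The divisor class `A_k = (2n + (k−1)(k−4))H − (k−1)Δ` as a vector in `ℝ²`. -/
def avecR (n k : ℤ) : ℝ × ℝ := ((2 * n + (k - 1) * (k - 4) : ℤ) , (-(k - 1) : ℤ))

/-- The divisor class `B_k = (2n + (k−2)(k+1))H − (k+1)Δ` as a vector in `ℝ²`. -/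
def bvecR (n k : ℤ) : ℝ × ℝ := ((2 * n + (k - 2) * (k + 1) : ℤ), (-(k + 1) : ℤ))

/-- For all integers `k` and real `s`:
`−f(n, s, k−1)·b(k) + f(n, s, k+1)·a(k) = 2(2n − (k−1)(k+1))·(2n + s² + 3s, s)`.
Consequently, if `s < 0` and `(k−1)(k+1) < 2n`, this vector is a positive scalar
multiple of `(m, −1/2)` where `m = −(2n + s²)/(2s) − 3/2`; moreover the semicircular
wall for `(1, 0, 1−n)` through `(s, 0)` has center `x = (s² + 2n)/(2s) = −m − 3/2`. -/
theorem stmt13 (n : ℤ) (k : ℤ) (s : ℝ) :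
    (-(fchar n s (k - 1))) • bvecR n k + (fchar n s (k + 1)) • avecR n k
      = ((2 * (2 * n - (k - 1) * (k + 1)) : ℤ) : ℝ)
          • ((2 * (n : ℝ) + s ^ 2 + 3 * s, s) : ℝ × ℝ) ∧
    (s < 0 → (k - 1) * (k + 1) < 2 * n →
      (∃ c : ℝ, 0 < c ∧
        (-(fchar n s (k - 1))) • bvecR n k + (fchar n s (k + 1)) • avecR n k
          = c • ((-(2 * (n : ℝ) + s ^ 2) / (2 * s) - 3 / 2, -(1 / 2)) : ℝ × ℝ)) ∧
      (s - (s ^ 2 + 2 * (n : ℝ)) / (2 * s)) ^ 2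
        = ((s ^ 2 + 2 * (n : ℝ)) / (2 * s)) ^ 2 - 2 * (n : ℝ) ∧
      (s ^ 2 + 2 * (n : ℝ)) / (2 * s)
        = -(-(2 * (n : ℝ) + s ^ 2) / (2 * s) - 3 / 2) - 3 / 2) := by
  have hmain : (-(fchar n s (k - 1))) • bvecR n k + (fchar n s (k + 1)) • avecR n k
      = ((2 * (2 * n - (k - 1) * (k + 1)) : ℤ) : ℝ)
          • ((2 * (n : ℝ) + s ^ 2 + 3 * s, s) : ℝ × ℝ) := by
    simp only [fchar, avecR, bvecR, Prod.smul_mk, Prod.mk_add_mk, smul_eq_mul, Prod.mk.injEq]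
    push_cast
    constructor <;> ring
  refine ⟨hmain, fun hs hk => ⟨⟨((2 * (2 * n - (k - 1) * (k + 1)) : ℤ) : ℝ) * (-2 * s), ?_, ?_⟩, ?_, ?_⟩⟩
  · apply mul_pos
    · have : (0 : ℤ) < 2 * (2 * n - (k - 1) * (k + 1)) := by omega
      exact_mod_cast this
    · linarith
  · rw [hmain]
    have hs' : s ≠ 0 := ne_of_lt hs
    simp only [Prod.smul_mk, smul_eq_mul, Prod.mk.injEq]
    constructor <;> field_simp <;> ring
  · have hs' : s ≠ 0 := ne_of_lt hs
    field_simp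
    ring
  · have hs' : s ≠ 0 := ne_of_lt hs
    field_simp
    ring
end

section
/- Let V₋₁, V₀, V₁ be finite-dimensional complex vector spaces, let a, b, c ∈ ℂ, and let I₁, I₂, I₃ : V₋₁ → V₀ and J₁, J₂, J₃ : V₀ → V₁ be linear maps. Suppose there exist linear maps M₁, M₂, M₃ : V₋₁ → V₁ such that, with indices taken mod 3, for each i ∈ {1,2,3}: J_i I_{i+1} = a·M_i, J_{i+1} I_i = b·M_i, and J_{i+2} I_{i+2} = c·M_i. Define the dual maps I'₁ = J₂ᵀ, I'₂ = J₁ᵀ, I'₃ = J₃ᵀ : V₁* → V₀* and J'₁ = I₂ᵀ, J'₂ = I₁ᵀ, J'₃ = I₃ᵀ : V₀* → V₋₁*. Then the maps M'₁ = M₁ᵀ, M'₂ = M₃ᵀ, M'₃ = M₂ᵀ : V₁* → V₋₁* satisfy, for each i ∈ {1,2,3}: J'_i I'_{i+1} = a·M'_i, J'_{i+1} I'_i = b·M'_i, and J'_{i+2} I'_{i+2} = c·M'_i. -/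
open LinearMap

private lemma dualMap_smul' {V W : Type*} [AddCommGroup V] [Module ℂ V]
    [AddCommGroup W] [Module ℂ W] (a : ℂ) (f : V →ₗ[ℂ] W) :
    (a • f).dualMap = a • f.dualMap := by
  ext φ v; simp

/-- Let `Vm, Vz, Vo` be finite-dimensional complex vector spaces,
`a, b, c ∈ ℂ`, and `I₁, I₂, I₃ : Vm → Vz`, `J₁, J₂, J₃ : Vz → Vo` linear maps,
indexed by `ZMod 3` (with the index `3` of the paper corresponding to `0`).
Suppose there exist `M₁, M₂, M₃ : Vm → Vo` such that for each `i`: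
`J_i I_{i+1} = a·M_i`, `J_{i+1} I_i = b·M_i`, `J_{i+2} I_{i+2} = c·M_i`.
Define dual maps `I'₁ = J₂ᵀ, I'₂ = J₁ᵀ, I'₃ = J₃ᵀ` and `J'₁ = I₂ᵀ, J'₂ = I₁ᵀ, J'₃ = I₃ᵀ`.
Then `M'₁ = M₁ᵀ, M'₂ = M₃ᵀ, M'₃ = M₂ᵀ` satisfy, for each `i`:
`J'_i I'_{i+1} = a·M'_i`, `J'_{i+1} I'_i = b·M'_i`, `J'_{i+2} I'_{i+2} = c·M'_i`. -/
theorem stmt16 (Vm Vz Vo : Type*)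
    [AddCommGroup Vm] [Module ℂ Vm] [FiniteDimensional ℂ Vm]
    [AddCommGroup Vz] [Module ℂ Vz] [FiniteDimensional ℂ Vz]
    [AddCommGroup Vo] [Module ℂ Vo] [FiniteDimensional ℂ Vo]
    (a b c : ℂ)
    (I : ZMod 3 → Vm →ₗ[ℂ] Vz) (J : ZMod 3 → Vz →ₗ[ℂ] Vo)
    (M : ZMod 3 → Vm →ₗ[ℂ] Vo)
    (hM : ∀ i : ZMod 3,
      J i ∘ₗ I (i + 1) = a • M i ∧
      J (i + 1) ∘ₗ I i = b • M i ∧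
      J (i + 2) ∘ₗ I (i + 2) = c • M i)
    (I' : ZMod 3 → Module.Dual ℂ Vo →ₗ[ℂ] Module.Dual ℂ Vz)
    (J' : ZMod 3 → Module.Dual ℂ Vz →ₗ[ℂ] Module.Dual ℂ Vm)
    (M' : ZMod 3 → Module.Dual ℂ Vo →ₗ[ℂ] Module.Dual ℂ Vm)
    (hI' : I' 1 = (J 2).dualMap ∧ I' 2 = (J 1).dualMap ∧ I' 0 = (J 0).dualMap)
    (hJ' : J' 1 = (I 2).dualMap ∧ J' 2 = (I 1).dualMap ∧ J' 0 = (I 0).dualMap)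
    (hM' : M' 1 = (M 1).dualMap ∧ M' 2 = (M 0).dualMap ∧ M' 0 = (M 2).dualMap) :
    ∀ i : ZMod 3,
      J' i ∘ₗ I' (i + 1) = a • M' i ∧
      J' (i + 1) ∘ₗ I' i = b • M' i ∧
      J' (i + 2) ∘ₗ I' (i + 2) = c • M' i := by
  obtain ⟨hI1, hI2, hI0⟩ := hI'
  obtain ⟨hJ1, hJ2, hJ0⟩ := hJ'
  obtain ⟨hM1, hM2, hM0⟩ := hM'
  obtain ⟨h1a, h1b, h1c⟩ := hM 1
  obtain ⟨h2a, h2b, h2c⟩ := hM 2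
  obtain ⟨h0a, h0b, h0c⟩ := hM 0
  have key : ∀ i : ZMod 3, i = 0 ∨ i = 1 ∨ i = 2 := by decide
  intro i
  rcases key i with rfl | rfl | rfl
  · refine ⟨?_, ?_, ?_⟩
    · rw [show ((0:ZMod 3)+1) = 1 by decide, hJ0, hI1, dualMap_comp_dualMap, hM0]
      rw [show J 2 ∘ₗ I 0 = a • M 2 from by simpa [show ((2:ZMod 3)+1) = 0 by decide] using h2a, dualMap_smul']
    · rw [show ((0:ZMod 3)+1) = 1 by decide, hJ1, hI0, dualMap_comp_dualMap, hM0]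
      rw [show J 0 ∘ₗ I 2 = b • M 2 from by simpa [show ((2:ZMod 3)+1) = 0 by decide] using h2b, dualMap_smul']
    · rw [show ((0:ZMod 3)+2) = 2 by decide, hJ2, hI2, dualMap_comp_dualMap, hM0]
      rw [show J 1 ∘ₗ I 1 = c • M 2 from by simpa [show ((2:ZMod 3)+2) = 1 by decide] using h2c, dualMap_smul']
  · refine ⟨?_, ?_, ?_⟩
    · rw [show ((1:ZMod 3)+1) = 2 by decide, hJ1, hI2, dualMap_comp_dualMap, hM1]
      rw [show J 1 ∘ₗ I 2 = a • M 1 from by simpa [show ((1:ZMod 3)+1) = 2 by decide] using h1a, dualMap_smul']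
    · rw [show ((1:ZMod 3)+1) = 2 by decide, hJ2, hI1, dualMap_comp_dualMap, hM1]
      rw [show J 2 ∘ₗ I 1 = b • M 1 from by simpa [show ((1:ZMod 3)+1) = 2 by decide] using h1b, dualMap_smul']
    · rw [show ((1:ZMod 3)+2) = 0 by decide, hJ0, hI0, dualMap_comp_dualMap, hM1]
      rw [show J 0 ∘ₗ I 0 = c • M 1 from by simpa [show ((1:ZMod 3)+2) = 0 by decide] using h1c, dualMap_smul']
  · refine ⟨?_, ?_, ?_⟩
    · rw [show ((2:ZMod 3)+1) = 0 by decide, hJ2, hI0, dualMap_comp_dualMap, hM2]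
      rw [show J 0 ∘ₗ I 1 = a • M 0 from by simpa using h0a, dualMap_smul']
    · rw [show ((2:ZMod 3)+1) = 0 by decide, hJ0, hI2, dualMap_comp_dualMap, hM2]
      rw [show J 1 ∘ₗ I 0 = b • M 0 from by simpa using h0b, dualMap_smul']
    · rw [show ((2:ZMod 3)+2) = 1 by decide, hJ1, hI1, dualMap_comp_dualMap, hM2]
      rw [show J 2 ∘ₗ I 2 = c • M 0 from by simpa using h0c, dualMap_smul']
end
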